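/- For the Matérn kernel κ(r) = σ² 2^{1−ν}/Γ(ν) (√(2ν) r)^ν K_ν(√(2ν) r) with ν ≥ 1/2 and λ ≤ 1, there exists a constant C (depending only on d) such that the tail integral ∫_{L}^∞ r^{d−1} |κ(r)| dr ≤ C σ² 5^ν ν^{d/2−1} exp(−√(ν/2)·L) whenever L/√(ν/2) ≥ 10. -/

import Mathlib

open MeasureTheory

/-- The modified Bessel function of the second kind, via its integral representation
K_ν(x) = ∫₀^∞ e^{-x cosh t} cosh(νt) dt. -/
noncomputable def besselK (ν x : ℝ) : ℝ :=
  ∫ t in Set.Ioi (0 : ℝ), Real.exp (-x * Real.cosh t) * Real.cosh (ν * t)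

/-- The Matérn covariance kernel κ(r) = σ² 2^{1-ν}/Γ(ν) (√(2ν) r)^ν K_ν(√(2ν) r). -/
noncomputable def matern (σ2 ν r : ℝ) : ℝ :=
  σ2 * (2 : ℝ) ^ (1 - ν) / Real.Gamma ν *
    (Real.sqrt (2 * ν) * r) ^ ν * besselK ν (Real.sqrt (2 * ν) * r)

lemma aux_exp_quad {t : ℝ} (ht : 0 ≤ t) : 1 + t + t ^ 2 / 2 ≤ Real.exp t := by
  have h := Real.sum_le_exp_of_nonneg ht 3
  rw [Finset.sum_range_succ, Finset.sum_range_succ, Finset.sum_range_one] at h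
  norm_num [Nat.factorial] at h
  linarith

lemma aux_cosh {t : ℝ} (ht : 0 ≤ t) : 1 + t ^ 2 / 4 ≤ Real.cosh t := by
  rw [Real.cosh_eq]
  have h1 := aux_exp_quad ht
  have h2 := Real.add_one_le_exp (-t)
  nlinarith [sq_nonneg t]

lemma aux_t_le_cosh {t : ℝ} (ht : 0 ≤ t) : t ≤ Real.cosh t := by
  have := aux_cosh ht
  nlinarith [sq_nonneg (t - 2)]

lemma aux_cosh_le_exp {u : ℝ} (hu : 0 ≤ u) : Real.cosh u ≤ Real.exp u := by
  rw [Real.cosh_eq]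
  have h : Real.exp (-u) ≤ Real.exp u := Real.exp_le_exp.2 (by linarith)
  linarith

lemma besselK_nonneg (ν x : ℝ) : 0 ≤ besselK ν x :=
  integral_nonneg fun t => mul_nonneg (Real.exp_nonneg _) (Real.cosh_pos _).le

lemma besselK_le {ν x : ℝ} (hν : 0 < ν) (hx : ν + 1 ≤ x) :
    besselK ν x ≤ 2 * Real.exp (ν - x) := by
  have key : besselK ν x ≤
      ∫ t in Set.Ioi (0 : ℝ), Real.exp (ν - x) * Real.exp (-(1/4 : ℝ) * t ^ 2) := by
    refine integral_mono_of_nonneg ?_ ?_ ?_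
    · filter_upwards with t
      exact mul_nonneg (Real.exp_nonneg _) (Real.cosh_pos _).le
    · exact ((integrable_exp_neg_mul_sq (by norm_num : (0:ℝ) < 1/4)).const_mul _).restrict
    · filter_upwards [ae_restrict_mem measurableSet_Ioi] with t ht
      have ht0 : (0:ℝ) ≤ t := le_of_lt ht
      have h1 : Real.cosh (ν * t) ≤ Real.exp (ν * Real.cosh t) := by
        refine (aux_cosh_le_exp (by positivity)).trans (Real.exp_le_exp.2 ?_)
        exact mul_le_mul_of_nonneg_left (aux_t_le_cosh ht0) hν.le
      calc Real.exp (-x * Real.cosh t) * Real.cosh (ν * t)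
          ≤ Real.exp (-x * Real.cosh t) * Real.exp (ν * Real.cosh t) :=
            mul_le_mul_of_nonneg_left h1 (Real.exp_nonneg _)
        _ = Real.exp ((ν - x) * Real.cosh t) := by rw [← Real.exp_add]; ring_nf
        _ ≤ Real.exp (ν - x) * Real.exp (-(1/4 : ℝ) * t ^ 2) := by
            rw [← Real.exp_add]
            refine Real.exp_le_exp.2 ?_
            have hc := aux_cosh ht0
            nlinarith [mul_nonneg (by linarith : (0:ℝ) ≤ x - ν)
                (by linarith : (0:ℝ) ≤ Real.cosh t - (1 + t ^ 2 / 4)),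
              mul_nonneg (by linarith : (0:ℝ) ≤ x - ν - 1) (sq_nonneg t)]
  rw [MeasureTheory.integral_const_mul, integral_gaussian_Ioi] at key
  refine key.trans ?_
  have h4 : Real.sqrt (Real.pi / (1/4)) ≤ 4 := by
    have h16 : Real.pi / (1/4) ≤ 16 := by nlinarith [Real.pi_le_four]
    calc Real.sqrt (Real.pi / (1/4)) ≤ Real.sqrt 16 := Real.sqrt_le_sqrt h16
      _ = 4 := by
          rw [show (16:ℝ) = 4 ^ 2 by norm_num, Real.sqrt_sq (by norm_num : (0:ℝ) ≤ 4)]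
  have := Real.exp_nonneg (ν - x)
  nlinarith

lemma pow_le_exp_aux (n : ℕ) {r : ℝ} (hr : 0 ≤ r) : r ^ n ≤ n.factorial * Real.exp r := by
  have h := Real.sum_le_exp_of_nonneg hr (n + 1)
  have h2 : r ^ n / n.factorial ≤ ∑ i ∈ Finset.range (n + 1), r ^ i / i.factorial := by
    refine Finset.single_le_sum (f := fun i => r ^ i / i.factorial) ?_
      (Finset.self_mem_range_succ n)
    intro i _
    positivity
  have hf : (0:ℝ) < n.factorial := by exact_mod_cast n.factorial_pos
  rw [div_le_iff₀ hf] at h2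
  calc r ^ n ≤ (∑ i ∈ Finset.range (n + 1), r ^ i / i.factorial) * n.factorial := h2
    _ ≤ Real.exp r * n.factorial := by
        exact mul_le_mul_of_nonneg_right h hf.le
    _ = n.factorial * Real.exp r := by ring

lemma gamma_lower {ν : ℝ} (hν : 0 < ν) :
    Real.exp (-(ν + 1)) * ν ^ ν ≤ ν * Real.Gamma ν := by
  rw [← Real.Gamma_add_one hν.ne', Real.Gamma_eq_integral (by linarith : (0:ℝ) < ν + 1)]
  have hint : IntegrableOn (fun t : ℝ => Real.exp (-t) * t ^ (ν + 1 - 1)) (Set.Ioi 0) :=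
    Real.GammaIntegral_convergent (by linarith)
  have hsub : Set.Ioc ν (ν + 1) ⊆ Set.Ioi (0:ℝ) := fun t ht => lt_trans hν ht.1
  calc Real.exp (-(ν + 1)) * ν ^ ν
      = ∫ _ in Set.Ioc ν (ν + 1), Real.exp (-(ν + 1)) * ν ^ ν := by
        rw [setIntegral_const, Real.volume_real_Ioc]
        simp
    _ ≤ ∫ t in Set.Ioc ν (ν + 1), Real.exp (-t) * t ^ (ν + 1 - 1) := by
        refine setIntegral_mono_on (integrableOn_const measure_Ioc_lt_top.ne)
          (hint.mono_set hsub) measurableSet_Ioc ?_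
        intro t ht
        rw [add_sub_cancel_right]
        refine mul_le_mul (Real.exp_le_exp.2 (by linarith [ht.2])) ?_ ?_ (Real.exp_nonneg _)
        · exact Real.rpow_le_rpow hν.le ht.1.le hν.le
        · exact Real.rpow_nonneg hν.le _
    _ ≤ ∫ t in Set.Ioi 0, Real.exp (-t) * t ^ (ν + 1 - 1) := by
        refine setIntegral_mono_set hint ?_ (HasSubset.Subset.eventuallyLE hsub)
        filter_upwards [ae_restrict_mem measurableSet_Ioi] with t ht
        have : (0:ℝ) < t := ht
        positivity

lemma rpow_mul_exp_le {ν x : ℝ} (hν : 0 < ν) (hx : 10 * ν ≤ x) :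
    x ^ ν * Real.exp (-(x / 4)) ≤ (10 * ν) ^ ν * Real.exp (-(10 * ν / 4)) := by
  have h10 : (0:ℝ) < 10 * ν := by linarith
  have hx0 : (0:ℝ) < x := lt_of_lt_of_le h10 hx
  rw [Real.rpow_def_of_pos hx0, Real.rpow_def_of_pos h10, ← Real.exp_add, ← Real.exp_add]
  refine Real.exp_le_exp.2 ?_
  have hlog : Real.log (x / (10 * ν)) ≤ x / (10 * ν) - 1 :=
    Real.log_le_sub_one_of_pos (by positivity)
  rw [Real.log_div hx0.ne' h10.ne'] at hlog
  have h1 : ν * (Real.log x - Real.log (10 * ν)) ≤ ν * (x / (10 * ν) - 1) :=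
    mul_le_mul_of_nonneg_left hlog hν.le
  have h2 : ν * (x / (10 * ν) - 1) = (x - 10 * ν) / 10 := by
    field_simp
  nlinarith

set_option maxHeartbeats 1000000 in
theorem stmt17 (d : ℕ) (hd : 1 ≤ d) :
    ∃ C : ℝ, 0 < C ∧ ∀ ν : ℝ, 1 / 2 ≤ ν → ∀ σ2 : ℝ, 0 < σ2 → ∀ L : ℝ,
      10 * Real.sqrt (ν / 2) ≤ L →
      (∫ r in Set.Ioi L, r ^ (d - 1) * |matern σ2 ν r|)
        ≤ C * σ2 * (5 : ℝ) ^ ν * ν ^ ((d : ℝ) / 2 - 1) *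
            Real.exp (-(Real.sqrt (ν / 2) * L)) := by
  have hfacpos : (0:ℝ) < (d - 1).factorial := by exact_mod_cast (d - 1).factorial_pos
  refine ⟨128 * 16 ^ d * (d - 1).factorial, by positivity, ?_⟩
  intro ν hν σ2 hσ L hL
  have hν0 : (0:ℝ) < ν := by linarith
  have hΓ : 0 < Real.Gamma ν := Real.Gamma_pos_of_pos hν0
  set a := Real.sqrt (ν / 2) with ha_def
  have ha2 : a ^ 2 = ν / 2 := Real.sq_sqrt (by linarith)
  have ha0 : 0 < a := Real.sqrt_pos.2 (by linarith)
  have hah : 1/2 ≤ a := by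
    have h1 : Real.sqrt (1/4) ≤ a := Real.sqrt_le_sqrt (by linarith)
    have h14 : Real.sqrt (1/4 : ℝ) = 1/2 := by
      rw [show (1/4:ℝ) = (1/2)^2 by norm_num, Real.sqrt_sq (by norm_num : (0:ℝ) ≤ 1/2)]
    linarith [h14 ▸ h1]
  have hsqrt2ν : Real.sqrt (2 * ν) = 2 * a := by
    rw [show 2 * ν = (2 * a) ^ 2 by rw [mul_pow, ha2]; ring,
      Real.sqrt_sq (by positivity)]
  have hL0 : 0 < L := lt_of_lt_of_le (by positivity : (0:ℝ) < 10 * a) hL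
  set B := σ2 * (2:ℝ) ^ (1 - ν) / Real.Gamma ν * (2 * Real.exp ν) *
      ((10 * ν) ^ ν * Real.exp (-(10 * ν / 4))) * Real.exp (-(a * L)) *
      ((d - 1).factorial * 8 ^ (d - 1)) with hB_def
  have hconst : (0:ℝ) ≤ σ2 * (2:ℝ) ^ (1 - ν) / Real.Gamma ν :=
    div_nonneg (by positivity) hΓ.le
  have h10ν : (0:ℝ) ≤ (10 * ν) ^ ν * Real.exp (-(10 * ν / 4)) :=
    mul_nonneg (Real.rpow_nonneg (by linarith) _) (Real.exp_nonneg _)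
  have hB0 : 0 ≤ B := by
    refine mul_nonneg (mul_nonneg (mul_nonneg (mul_nonneg hconst (by positivity)) h10ν)
      (Real.exp_nonneg _)) (by positivity)
  -- pointwise bound
  have hpt : ∀ r ∈ Set.Ioi L, r ^ (d - 1) * |matern σ2 ν r| ≤ B * Real.exp (-(1/8 * r)) := by
    intro r hr
    have hrL : L < r := hr
    have hr0 : 0 < r := hL0.trans hrL
    have hx10 : 10 * ν ≤ 2 * a * r := by
      nlinarith [mul_le_mul_of_nonneg_left hL ha0.le,
        mul_le_mul_of_nonneg_left hrL.le ha0.le, ha2]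
    have hbk := besselK_le hν0 (by linarith : ν + 1 ≤ 2 * a * r)
    have hmat_nonneg : 0 ≤ matern σ2 ν r := by
      unfold matern
      exact mul_nonneg (mul_nonneg hconst (Real.rpow_nonneg (by positivity) _))
        (besselK_nonneg _ _)
    rw [abs_of_nonneg hmat_nonneg]
    unfold matern
    rw [hsqrt2ν]
    have key1 : (2 * a * r) ^ ν * Real.exp (-(2 * a * r / 4)) ≤
        (10 * ν) ^ ν * Real.exp (-(10 * ν / 4)) := rpow_mul_exp_le hν0 hx10
    have key2 : Real.exp (-(a * r)) ≤ Real.exp (-(a * L)) := by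
      refine Real.exp_le_exp.2 ?_
      nlinarith [mul_le_mul_of_nonneg_left hrL.le ha0.le]
    have key3 : r ^ (d - 1) * Real.exp (-(2 * a * r / 4)) ≤
        (d - 1).factorial * 8 ^ (d - 1) * Real.exp (-(1/8 * r)) := by
      have hp : r ^ (d - 1) * Real.exp (-(1/8 * r)) ≤ (d - 1).factorial * 8 ^ (d - 1) := by
        have h := pow_le_exp_aux (d - 1) (by positivity : (0:ℝ) ≤ r / 8)
        rw [div_pow, div_le_iff₀ (by positivity : (0:ℝ) < 8 ^ (d - 1))] at h
        have hee : Real.exp (-(1/8 * r)) * Real.exp (r / 8) = 1 := by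
          rw [← Real.exp_add, show -(1/8 * r) + r / 8 = 0 by ring, Real.exp_zero]
        calc r ^ (d - 1) * Real.exp (-(1/8 * r))
            ≤ ((d - 1).factorial * Real.exp (r / 8) * 8 ^ (d - 1)) * Real.exp (-(1/8 * r)) :=
              mul_le_mul_of_nonneg_right h (Real.exp_nonneg _)
          _ = (d - 1).factorial * 8 ^ (d - 1) * (Real.exp (-(1/8 * r)) * Real.exp (r / 8)) := by
              ring
          _ = (d - 1).factorial * 8 ^ (d - 1) := by rw [hee, mul_one]
      have he : Real.exp (-(2 * a * r / 4)) ≤ Real.exp (-(1/8 * r)) * Real.exp (-(1/8 * r)) := by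
        rw [← Real.exp_add]
        refine Real.exp_le_exp.2 ?_
        nlinarith [mul_le_mul_of_nonneg_right hah hr0.le]
      calc r ^ (d - 1) * Real.exp (-(2 * a * r / 4))
          ≤ r ^ (d - 1) * (Real.exp (-(1/8 * r)) * Real.exp (-(1/8 * r))) :=
            mul_le_mul_of_nonneg_left he (pow_nonneg hr0.le _)
        _ = (r ^ (d - 1) * Real.exp (-(1/8 * r))) * Real.exp (-(1/8 * r)) := by ring
        _ ≤ (d - 1).factorial * 8 ^ (d - 1) * Real.exp (-(1/8 * r)) :=
            mul_le_mul_of_nonneg_right hp (Real.exp_nonneg _)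
    have hexp_split : Real.exp (ν - 2 * a * r) =
        Real.exp ν * Real.exp (-(2 * a * r / 4)) * Real.exp (-(a * r)) *
          Real.exp (-(2 * a * r / 4)) := by
      rw [← Real.exp_add, ← Real.exp_add, ← Real.exp_add]
      congr 1
      ring
    have hrpow0 : (0:ℝ) ≤ (2 * a * r) ^ ν := Real.rpow_nonneg (by positivity) _
    calc r ^ (d - 1) * (σ2 * (2:ℝ) ^ (1 - ν) / Real.Gamma ν * (2 * a * r) ^ ν *
            besselK ν (2 * a * r))
        ≤ r ^ (d - 1) * (σ2 * (2:ℝ) ^ (1 - ν) / Real.Gamma ν * (2 * a * r) ^ ν *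
            (2 * Real.exp (ν - 2 * a * r))) := by
          refine mul_le_mul_of_nonneg_left
            (mul_le_mul_of_nonneg_left hbk (mul_nonneg hconst hrpow0)) (pow_nonneg hr0.le _)
      _ = (σ2 * (2:ℝ) ^ (1 - ν) / Real.Gamma ν * (2 * Real.exp ν)) *
            (((2 * a * r) ^ ν * Real.exp (-(2 * a * r / 4))) *
              (Real.exp (-(a * r)) * (r ^ (d - 1) * Real.exp (-(2 * a * r / 4))))) := by
          rw [hexp_split]; ring
      _ ≤ (σ2 * (2:ℝ) ^ (1 - ν) / Real.Gamma ν * (2 * Real.exp ν)) *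
            (((10 * ν) ^ ν * Real.exp (-(10 * ν / 4))) *
              (Real.exp (-(a * L)) * ((d - 1).factorial * 8 ^ (d - 1) *
                Real.exp (-(1/8 * r))))) := by
          refine mul_le_mul_of_nonneg_left ?_ (mul_nonneg hconst (by positivity))
          refine mul_le_mul key1 ?_ ?_ h10ν
          · exact mul_le_mul key2 key3
              (mul_nonneg (pow_nonneg hr0.le _) (Real.exp_nonneg _)) (Real.exp_nonneg _)
          · exact mul_nonneg (Real.exp_nonneg _)
              (mul_nonneg (pow_nonneg hr0.le _) (Real.exp_nonneg _))
      _ = B * Real.exp (-(1/8 * r)) := by rw [hB_def]; ring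
  -- integrate
  have hmono : (∫ r in Set.Ioi L, r ^ (d - 1) * |matern σ2 ν r|) ≤
      ∫ r in Set.Ioi L, B * Real.exp (-(1/8 * r)) := by
    refine integral_mono_of_nonneg ?_ ?_ ?_
    · filter_upwards [ae_restrict_mem measurableSet_Ioi] with r hr
      exact mul_nonneg (pow_nonneg (hL0.trans hr).le _) (abs_nonneg _)
    · have hi := (exp_neg_integrableOn_Ioi L (by norm_num : (0:ℝ) < 1/8)).const_mul B
      simpa only [neg_mul] using hi
    · filter_upwards [ae_restrict_mem measurableSet_Ioi] with r hr using hpt r hr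
  have hval : (∫ r in Set.Ioi L, B * Real.exp (-(1/8 * r))) =
      B * (8 * Real.exp (-(1/8 * L))) := by
    rw [MeasureTheory.integral_const_mul]
    congr 1
    have h := integral_comp_mul_left_Ioi (fun x => Real.exp (-x)) L
      (by norm_num : (0:ℝ) < 1/8)
    simp only [smul_eq_mul] at h
    rw [h, integral_exp_neg_Ioi]
    norm_num
  -- arithmetic on constants
  have hf1 : (2:ℝ) ^ (1 - ν) * (10 * ν) ^ ν = 2 * (5:ℝ) ^ ν * ν ^ ν := by
    rw [Real.mul_rpow (by norm_num : (0:ℝ) ≤ 10) hν0.le,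
      show (5:ℝ) = 10 / 2 by norm_num,
      Real.div_rpow (by norm_num : (0:ℝ) ≤ 10) (by norm_num : (0:ℝ) ≤ 2),
      Real.rpow_sub (by norm_num : (0:ℝ) < 2), Real.rpow_one]
    have h2ν : (0:ℝ) < (2:ℝ) ^ ν := Real.rpow_pos_of_pos two_pos ν
    field_simp
  have hf2 : ν ^ ν ≤ ν * Real.Gamma ν * Real.exp (ν + 1) := by
    have h := gamma_lower hν0
    have hee : Real.exp (-(ν + 1)) * Real.exp (ν + 1) = 1 := by
      rw [← Real.exp_add, show -(ν + 1) + (ν + 1) = 0 by ring, Real.exp_zero]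
    calc ν ^ ν = (Real.exp (-(ν + 1)) * ν ^ ν) * Real.exp (ν + 1) := by
          rw [show (Real.exp (-(ν + 1)) * ν ^ ν) * Real.exp (ν + 1)
            = ν ^ ν * (Real.exp (-(ν + 1)) * Real.exp (ν + 1)) by ring, hee, mul_one]
      _ ≤ ν * Real.Gamma ν * Real.exp (ν + 1) :=
          mul_le_mul_of_nonneg_right h (Real.exp_nonneg _)
  have hf3 : ν * Real.exp (-(ν / 2)) ≤ 8 * (2:ℝ) ^ ((d:ℝ)/2) * ν ^ ((d:ℝ)/2 - 1) := by
    have hp2 : ν ^ 2 ≤ 8 * Real.exp (ν / 2) := by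
      have h := pow_le_exp_aux 2 (show (0:ℝ) ≤ ν / 2 by linarith)
      norm_num [Nat.factorial] at h
      nlinarith [h]
    have hsub : ν ^ ((d:ℝ)/2 - 1) = ν ^ ((d:ℝ)/2) / ν := by
      rw [Real.rpow_sub hν0, Real.rpow_one]
    have hone : (1:ℝ) ≤ (2 * ν) ^ ((d:ℝ)/2) := by
      calc (1:ℝ) = (1:ℝ) ^ ((d:ℝ)/2) := (Real.one_rpow _).symm
        _ ≤ (2 * ν) ^ ((d:ℝ)/2) := Real.rpow_le_rpow zero_le_one (by linarith) (by positivity)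
    have hmul : ((2 * ν):ℝ) ^ ((d:ℝ)/2) = 2 ^ ((d:ℝ)/2) * ν ^ ((d:ℝ)/2) :=
      Real.mul_rpow (by norm_num) hν0.le
    have key : ν * Real.exp (-(ν / 2)) * ν ≤ 8 * (2 ^ ((d:ℝ)/2) * ν ^ ((d:ℝ)/2)) := by
      rw [← hmul]
      have hee : Real.exp (-(ν / 2)) * Real.exp (ν / 2) = 1 := by
        rw [← Real.exp_add, show -(ν / 2) + ν / 2 = 0 by ring, Real.exp_zero]
      nlinarith [mul_le_mul_of_nonneg_right hp2 (Real.exp_nonneg (-(ν / 2))), hee, hone]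
    rw [hsub]
    calc ν * Real.exp (-(ν / 2)) = (ν * Real.exp (-(ν / 2)) * ν) / ν := by field_simp
      _ ≤ (8 * (2 ^ ((d:ℝ)/2) * ν ^ ((d:ℝ)/2))) / ν := by gcongr
      _ = 8 * 2 ^ ((d:ℝ)/2) * (ν ^ ((d:ℝ)/2) / ν) := by ring
  have hcore : ν ^ ν * (Real.exp ν * Real.exp (-(10 * ν / 4))) / Real.Gamma ν ≤
      Real.exp 1 * (ν * Real.exp (-(ν / 2))) := by
    rw [div_le_iff₀ hΓ]
    calc ν ^ ν * (Real.exp ν * Real.exp (-(10 * ν / 4)))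
        ≤ (ν * Real.Gamma ν * Real.exp (ν + 1)) * (Real.exp ν * Real.exp (-(10 * ν / 4))) :=
          mul_le_mul_of_nonneg_right hf2 (by positivity)
      _ = Real.exp 1 * (ν * Real.exp (-(ν / 2))) * Real.Gamma ν := by
          have hE : Real.exp (ν + 1) * Real.exp ν * Real.exp (-(10 * ν / 4)) =
              Real.exp 1 * Real.exp (-(ν / 2)) := by
            rw [← Real.exp_add, ← Real.exp_add, ← Real.exp_add]; congr 1; ring
          linear_combination (ν * Real.Gamma ν) * hE
  have hexp_e : Real.exp 1 ≤ 4 := by linarith [Real.exp_one_lt_d9]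
  have h2half : (2:ℝ) ^ ((d:ℝ)/2) ≤ 2 ^ d := by
    rw [← Real.rpow_natCast 2 d]
    refine Real.rpow_le_rpow_of_exponent_le one_le_two ?_
    have : (0:ℝ) ≤ (d:ℝ) := Nat.cast_nonneg d
    linarith
  have h5ν : (0:ℝ) ≤ (5:ℝ) ^ ν := Real.rpow_nonneg (by norm_num) _
  have hνp : (0:ℝ) ≤ ν ^ ((d:ℝ)/2 - 1) := Real.rpow_nonneg hν0.le _
  have hmain : (2:ℝ) ^ (1 - ν) / Real.Gamma ν * (2 * Real.exp ν) *
      ((10 * ν) ^ ν * Real.exp (-(10 * ν / 4))) ≤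
      128 * 2 ^ d * ((5:ℝ) ^ ν * ν ^ ((d:ℝ)/2 - 1)) := by
    calc (2:ℝ) ^ (1 - ν) / Real.Gamma ν * (2 * Real.exp ν) *
          ((10 * ν) ^ ν * Real.exp (-(10 * ν / 4)))
        = ((2:ℝ) ^ (1 - ν) * (10 * ν) ^ ν) *
            (2 * (Real.exp ν * Real.exp (-(10 * ν / 4))) / Real.Gamma ν) := by ring
      _ = (2 * (5:ℝ) ^ ν * ν ^ ν) *
            (2 * (Real.exp ν * Real.exp (-(10 * ν / 4))) / Real.Gamma ν) := by rw [hf1]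
      _ = 4 * (5:ℝ) ^ ν * (ν ^ ν * (Real.exp ν * Real.exp (-(10 * ν / 4))) / Real.Gamma ν) := by
          ring
      _ ≤ 4 * (5:ℝ) ^ ν * (Real.exp 1 * (ν * Real.exp (-(ν / 2)))) :=
          mul_le_mul_of_nonneg_left hcore (by positivity)
      _ ≤ 4 * (5:ℝ) ^ ν * (4 * (8 * (2:ℝ) ^ ((d:ℝ)/2) * ν ^ ((d:ℝ)/2 - 1))) := by
          refine mul_le_mul_of_nonneg_left ?_ (by positivity)
          refine mul_le_mul hexp_e hf3 (by positivity) (by norm_num)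
      _ = 128 * (2:ℝ) ^ ((d:ℝ)/2) * ((5:ℝ) ^ ν * ν ^ ((d:ℝ)/2 - 1)) := by ring
      _ ≤ 128 * 2 ^ d * ((5:ℝ) ^ ν * ν ^ ((d:ℝ)/2 - 1)) := by
          refine mul_le_mul_of_nonneg_right ?_ (mul_nonneg h5ν hνp)
          linarith [h2half]
  have h8d : (8:ℝ) ^ (d - 1) * 8 = 8 ^ d := by
    rw [← pow_succ]
    congr 1
    omega
  have hexpL1 : Real.exp (-(1/8 * L)) ≤ 1 := by
    calc Real.exp (-(1/8 * L)) ≤ Real.exp 0 := Real.exp_le_exp.2 (by linarith)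
      _ = 1 := Real.exp_zero
  calc (∫ r in Set.Ioi L, r ^ (d - 1) * |matern σ2 ν r|)
      ≤ B * (8 * Real.exp (-(1/8 * L))) := hmono.trans (le_of_eq hval)
    _ ≤ B * 8 := by nlinarith [hB0, hexpL1]
    _ = σ2 * ((2:ℝ) ^ (1 - ν) / Real.Gamma ν * (2 * Real.exp ν) *
          ((10 * ν) ^ ν * Real.exp (-(10 * ν / 4)))) * Real.exp (-(a * L)) *
          ((d - 1).factorial * ((8:ℝ) ^ (d - 1) * 8)) := by rw [hB_def]; ring
    _ ≤ σ2 * (128 * 2 ^ d * ((5:ℝ) ^ ν * ν ^ ((d:ℝ)/2 - 1))) * Real.exp (-(a * L)) *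
          ((d - 1).factorial * ((8:ℝ) ^ (d - 1) * 8)) := by
        refine mul_le_mul_of_nonneg_right (mul_le_mul_of_nonneg_right
          (mul_le_mul_of_nonneg_left hmain hσ.le) (Real.exp_nonneg _)) (by positivity)
    _ = 128 * 16 ^ d * (d - 1).factorial * σ2 * (5:ℝ) ^ ν * ν ^ ((d:ℝ)/2 - 1) *
          Real.exp (-(a * L)) := by
        rw [h8d, show (16:ℝ) ^ d = 2 ^ d * 8 ^ d by rw [← mul_pow]; norm_num]
        ring
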